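/- arXiv:2504.21010 — 2 statements merged into one kernel-verified Lean document; each statement's English description precedes it below -/
import Mathlib

section
/- Let G be a finite abelian group of order n with identity e, and for each character χ of G set y_χ := Σ_{g∈G} χ(g) x_g. Then a polynomial f ∈ ℂ[x_g : g ∈ G] satisfies D_g f = 0 for all g ∈ G∖{e} if and only if f is a polynomial in the group determinant Θ_G(x_g) = Π_{χ∈Ĝ} y_χ. -/
open MvPolynomial

/-- The Frobenius differential operator `D_g f = ∑_{h ∈ G} x_{g⁻¹ h} ∂f/∂x_h`. -/
noncomputable def Dop {G : Type*} [CommGroup G] [Fintype G] (g : G)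
    (f : MvPolynomial G ℂ) : MvPolynomial G ℂ :=
  ∑ h : G, X (g⁻¹ * h) * pderiv h f

/-- The group determinant `Θ_G = det (x_{g h⁻¹})_{g,h ∈ G}`. -/
noncomputable def groupDet (G : Type*) [CommGroup G] [Fintype G] [DecidableEq G] :
    MvPolynomial G ℂ :=
  Matrix.det (Matrix.of fun g h : G => (X (g * h⁻¹) : MvPolynomial G ℂ))




open Finset

namespace FrobAux

variable {G : Type*} [CommGroup G] [Fintype G]

instance : NeZero ((Monoid.exponent G : ℂ)) :=
  ⟨Nat.cast_ne_zero.mpr (Monoid.exponent_ne_zero_of_finite)⟩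

noncomputable instance : Fintype (G →* ℂˣ) :=
  letI : Finite (G →* ℂˣ) :=
    Finite.of_equiv G ((CommGroup.monoidHom_mulEquiv_of_hasEnoughRootsOfUnity G ℂ).some.symm).toEquiv
  Fintype.ofFinite _

lemma card_char : Fintype.card (G →* ℂˣ) = Fintype.card G :=
  Fintype.card_eq.mpr ⟨(CommGroup.monoidHom_mulEquiv_of_hasEnoughRootsOfUnity G ℂ).some.toEquiv⟩

lemma exists_char_ne_one {g : G} (hg : g ≠ 1) : ∃ χ : G →* ℂˣ, χ g ≠ 1 :=
  CommGroup.exists_apply_ne_one_of_hasEnoughRootsOfUnity G ℂ hg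

lemma sum_char_eq_zero {χ : G →* ℂˣ} (hχ : χ ≠ 1) : ∑ g : G, ((χ g : ℂˣ) : ℂ) = 0 := by
  obtain ⟨h, hh⟩ : ∃ h : G, χ h ≠ 1 := by
    by_contra hc
    push_neg at hc
    exact hχ (MonoidHom.ext fun g => hc g)
  have key : ((χ h : ℂˣ) : ℂ) * ∑ g : G, ((χ g : ℂˣ) : ℂ) = ∑ g : G, ((χ g : ℂˣ) : ℂ) := by
    rw [Finset.mul_sum]
    refine Fintype.sum_equiv (Equiv.mulLeft h) _ _ fun g => ?_
    simp [mul_comm]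
  have : (((χ h : ℂˣ) : ℂ) - 1) * ∑ g : G, ((χ g : ℂˣ) : ℂ) = 0 := by
    rw [sub_mul, one_mul, key, sub_self]
  rcases mul_eq_zero.mp this with h' | h'
  · exact absurd (Units.ext (by simpa using sub_eq_zero.mp h')) hh
  · exact h'

lemma sum_dual_eq_zero {g : G} (hg : g ≠ 1) : ∑ χ : G →* ℂˣ, ((χ g : ℂˣ) : ℂ) = 0 := by
  obtain ⟨ψ, hψ⟩ := exists_char_ne_one hg
  have key : ((ψ g : ℂˣ) : ℂ) * ∑ χ : G →* ℂˣ, ((χ g : ℂˣ) : ℂ)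
      = ∑ χ : G →* ℂˣ, ((χ g : ℂˣ) : ℂ) := by
    rw [Finset.mul_sum]
    refine Fintype.sum_equiv (Equiv.mulLeft ψ) _ _ fun χ => ?_
    simp [mul_comm]
  have : (((ψ g : ℂˣ) : ℂ) - 1) * ∑ χ : G →* ℂˣ, ((χ g : ℂˣ) : ℂ) = 0 := by
    rw [sub_mul, one_mul, key, sub_self]
  rcases mul_eq_zero.mp this with h' | h'
  · exact absurd (Units.ext (by simpa using sub_eq_zero.mp h')) hψ
  · exact h'

end FrobAux

namespace FrobAux

variable {G : Type*} [CommGroup G] [Fintype G]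

/-- `y_χ = ∑ g, χ(g) x_g`. -/
noncomputable def Y (χ : G →* ℂˣ) : MvPolynomial G ℂ :=
  ∑ g : G, C ((χ g : ℂˣ) : ℂ) * X g

lemma orth1 [DecidableEq (G →* ℂˣ)] (χ ψ : G →* ℂˣ) :
    ∑ g : G, ((χ g : ℂˣ) : ℂ) * (((ψ g)⁻¹ : ℂˣ) : ℂ)
      = if χ = ψ then (Fintype.card G : ℂ) else 0 := by
  have key : ∀ g : G, ((χ g : ℂˣ) : ℂ) * (((ψ g)⁻¹ : ℂˣ) : ℂ) = (((χ * ψ⁻¹) g : ℂˣ) : ℂ) := by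
    intro g; simp
  simp_rw [key]
  by_cases h : χ = ψ
  · simp [h]
  · rw [if_neg h]
    exact sum_char_eq_zero fun hc => h (mul_inv_eq_one.mp hc)

lemma orth2 [DecidableEq G] (g h : G) :
    ∑ χ : G →* ℂˣ, (((χ g)⁻¹ : ℂˣ) : ℂ) * ((χ h : ℂˣ) : ℂ)
      = if g = h then (Fintype.card G : ℂ) else 0 := by
  have key : ∀ χ : G →* ℂˣ, (((χ g)⁻¹ : ℂˣ) : ℂ) * ((χ h : ℂˣ) : ℂ)
      = ((χ (g⁻¹ * h) : ℂˣ) : ℂ) := by intro χ; simp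
  simp_rw [key]
  by_cases hgh : g = h
  · subst hgh
    rw [if_pos rfl]
    have h1 : ∀ χ : G →* ℂˣ, ((χ (g⁻¹ * g) : ℂˣ) : ℂ) = 1 := by intro χ; simp
    simp_rw [h1]
    simp [card_char (G := G)]
  · rw [if_neg hgh]
    exact sum_dual_eq_zero fun hc => hgh (inv_mul_eq_one.mp hc)

/-- Fourier transform as an algebra map on polynomial rings. -/
noncomputable def Phi : MvPolynomial (G →* ℂˣ) ℂ →ₐ[ℂ] MvPolynomial G ℂ :=
  aeval fun χ => Y χ

noncomputable def Psi : MvPolynomial G ℂ →ₐ[ℂ] MvPolynomial (G →* ℂˣ) ℂ :=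
  aeval fun g => C ((Fintype.card G : ℂ)⁻¹) *
    ∑ χ : G →* ℂˣ, C ((((χ g)⁻¹ : ℂˣ)) : ℂ) * X χ

lemma cardG_ne_zero : ((Fintype.card G : ℂ)) ≠ 0 :=
  Nat.cast_ne_zero.mpr Fintype.card_ne_zero

lemma Psi_comp_Phi : (Psi (G := G)).comp Phi = AlgHom.id ℂ _ := by
  classical
  apply MvPolynomial.algHom_ext
  intro χ
  simp only [AlgHom.comp_apply, Phi, Psi, aeval_X, AlgHom.id_apply, Y, map_sum, map_mul,
    aeval_C, aeval_X, algebraMap_eq]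
  simp_rw [Finset.mul_sum, ← mul_assoc, ← C_mul]
  rw [Finset.sum_comm]
  have key : ∀ ψ : G →* ℂˣ,
      ∑ g : G, C (((χ g : ℂˣ) : ℂ) * (Fintype.card G : ℂ)⁻¹ * (((ψ g)⁻¹ : ℂˣ) : ℂ)) * X ψ
      = (if χ = ψ then (1 : MvPolynomial (G →* ℂˣ) ℂ) else 0) * X ψ := by
    intro ψ
    rw [← Finset.sum_mul, ← map_sum]
    congr 1
    have h2 : ∑ g : G, ((χ g : ℂˣ) : ℂ) * (Fintype.card G : ℂ)⁻¹ * (((ψ g)⁻¹ : ℂˣ) : ℂ)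
        = (Fintype.card G : ℂ)⁻¹ * ∑ g : G, ((χ g : ℂˣ) : ℂ) * (((ψ g)⁻¹ : ℂˣ) : ℂ) := by
      rw [Finset.mul_sum]; exact Finset.sum_congr rfl fun g _ => by ring
    rw [h2, orth1]
    split_ifs with h
    · rw [inv_mul_cancel₀ cardG_ne_zero]; simp
    · simp
  simp_rw [key, ite_mul, one_mul, zero_mul]
  simp

lemma Phi_comp_Psi : (Phi (G := G)).comp Psi = AlgHom.id ℂ _ := by
  classical
  apply MvPolynomial.algHom_ext
  intro g
  simp only [AlgHom.comp_apply, Phi, Psi, aeval_X, AlgHom.id_apply, Y, map_sum, map_mul,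
    aeval_C, aeval_X, algebraMap_eq]
  simp_rw [Finset.mul_sum, ← mul_assoc, ← C_mul]
  rw [Finset.sum_comm]
  have key : ∀ h : G,
      ∑ χ : G →* ℂˣ, C ((Fintype.card G : ℂ)⁻¹ * (((χ g)⁻¹ : ℂˣ) : ℂ) * ((χ h : ℂˣ) : ℂ)) * X h
      = (if g = h then (1 : MvPolynomial G ℂ) else 0) * X h := by
    intro h
    rw [← Finset.sum_mul, ← map_sum]
    congr 1
    have h2 : ∑ χ : G →* ℂˣ, (Fintype.card G : ℂ)⁻¹ * (((χ g)⁻¹ : ℂˣ) : ℂ) * ((χ h : ℂˣ) : ℂ)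
        = (Fintype.card G : ℂ)⁻¹ * ∑ χ : G →* ℂˣ, (((χ g)⁻¹ : ℂˣ) : ℂ) * ((χ h : ℂˣ) : ℂ) := by
      rw [Finset.mul_sum]; exact Finset.sum_congr rfl fun χ _ => by ring
    rw [h2, orth2]
    split_ifs with h'
    · rw [inv_mul_cancel₀ cardG_ne_zero]; simp
    · simp
  simp_rw [key, ite_mul, one_mul, zero_mul]
  simp

/-- The Fourier change of variables as an algebra isomorphism. -/
noncomputable def PhiEquiv : MvPolynomial (G →* ℂˣ) ℂ ≃ₐ[ℂ] MvPolynomial G ℂ :=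
  AlgEquiv.ofAlgHom Phi Psi Phi_comp_Psi Psi_comp_Phi

lemma PhiEquiv_apply (p : MvPolynomial (G →* ℂˣ) ℂ) : PhiEquiv (G := G) p = Phi p := rfl

end FrobAux



namespace FrobAux

variable {G : Type*} [CommGroup G] [Fintype G]

lemma Dop_one (g : G) : Dop g (1 : MvPolynomial G ℂ) = 0 := by
  simp [Dop]

lemma Dop_C (g : G) (c : ℂ) : Dop g (C c : MvPolynomial G ℂ) = 0 := by
  simp [Dop]

lemma Dop_mul (g : G) (p q : MvPolynomial G ℂ) :
    Dop g (p * q) = Dop g p * q + p * Dop g q := by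
  simp only [Dop, pderiv_mul, mul_add, Finset.sum_add_distrib]
  congr 1
  · rw [Finset.sum_mul]; exact Finset.sum_congr rfl fun h _ => by ring
  · rw [Finset.mul_sum]; exact Finset.sum_congr rfl fun h _ => by ring

lemma Dop_sum {ι : Type*} (g : G) (s : Finset ι) (F : ι → MvPolynomial G ℂ) :
    Dop g (∑ i ∈ s, F i) = ∑ i ∈ s, Dop g (F i) := by
  simp only [Dop, map_sum, Finset.mul_sum]
  rw [Finset.sum_comm]

lemma Dop_Y (g : G) (χ : G →* ℂˣ) :
    Dop g (Y χ) = C ((χ g : ℂˣ) : ℂ) * Y χ := by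
  classical
  have hd : ∀ h : G, pderiv h (Y χ) = C ((χ h : ℂˣ) : ℂ) := by
    intro h
    simp [Y, pderiv_X, Pi.single_apply, mul_ite, Finset.sum_ite_eq']
  rw [Dop]
  simp_rw [hd]
  rw [Y, Finset.mul_sum]
  refine Fintype.sum_equiv (Equiv.mulLeft g⁻¹) _ _ fun h => ?_
  have hval : ((χ g : ℂˣ) : ℂ) * ((χ (g⁻¹ * h) : ℂˣ) : ℂ) = ((χ h : ℂˣ) : ℂ) := by
    rw [← Units.val_mul, ← map_mul]
    congr 2
    group
  simp only [Equiv.coe_mulLeft]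
  rw [← hval, C_mul]
  ring

lemma Dop_pow {g : G} {p : MvPolynomial G ℂ} {c : ℂ} (hp : Dop g p = C c * p) (k : ℕ) :
    Dop g (p ^ k) = C ((k : ℂ) * c) * p ^ k := by
  induction k with
  | zero => rw [pow_zero, Dop_one, Nat.cast_zero, zero_mul, map_zero, zero_mul]
  | succ n ih =>
    rw [pow_succ, Dop_mul, ih, hp]
    push_cast
    rw [add_mul, one_mul, C_add]
    ring

lemma Dop_prod {ι : Type*} (g : G) (s : Finset ι) (F : ι → MvPolynomial G ℂ) (c : ι → ℂ)
    (h : ∀ i ∈ s, Dop g (F i) = C (c i) * F i) :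
    Dop g (∏ i ∈ s, F i) = C (∑ i ∈ s, c i) * ∏ i ∈ s, F i := by
  classical
  induction s using Finset.induction_on with
  | empty => simp [Dop_one]
  | @insert x s hx ih =>
    rw [Finset.prod_insert hx, Dop_mul, Finset.sum_insert hx,
      ih (fun i hi => h i (Finset.mem_insert_of_mem hi)), h x (Finset.mem_insert_self x s),
      C_add]
    ring

lemma Phi_C (c : ℂ) : Phi (C c : MvPolynomial (G →* ℂˣ) ℂ) = C c := by
  simp [Phi, algebraMap_eq]

lemma Phi_monomial (a : (G →* ℂˣ) →₀ ℕ) (c : ℂ) :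
    Phi (monomial a c) = C c * ∏ χ : G →* ℂˣ, Y χ ^ a χ := by
  rw [monomial_eq, map_mul, Phi_C]
  congr 1
  rw [Finsupp.prod, map_prod]
  simp only [map_pow, Phi, aeval_X]
  exact Finset.prod_subset (Finset.subset_univ _) fun χ _ hχ => by
    rw [Finsupp.notMem_support_iff.mp hχ, pow_zero]

/-- eigenvalue of `Dop g` on the monomial with exponents `a`. -/
noncomputable def W (g : G) (a : (G →* ℂˣ) →₀ ℕ) : ℂ :=
  ∑ χ : G →* ℂˣ, (a χ : ℂ) * ((χ g : ℂˣ) : ℂ)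

lemma Dop_Phi_monomial (g : G) (a : (G →* ℂˣ) →₀ ℕ) (c : ℂ) :
    Dop g (Phi (monomial a c)) = C (W g a) * Phi (monomial a c) := by
  rw [Phi_monomial, Dop_mul, Dop_C, zero_mul, zero_add,
    Dop_prod g Finset.univ _ (fun χ => (a χ : ℂ) * ((χ g : ℂˣ) : ℂ))
      (fun χ _ => Dop_pow (Dop_Y g χ) (a χ)), W]
  ring

lemma Dop_Phi (g : G) (p : MvPolynomial (G →* ℂˣ) ℂ) :
    Dop g (Phi p) =
      Phi (∑ a ∈ p.support, monomial a (W g a * coeff a p)) := by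
  conv_lhs => rw [← support_sum_monomial_coeff p]
  rw [map_sum, Dop_sum, map_sum]
  exact Finset.sum_congr rfl fun a _ => by
    rw [Dop_Phi_monomial, ← C_mul_monomial, map_mul, Phi_C]

lemma Dop_Phi_eq_zero_iff (g : G) (p : MvPolynomial (G →* ℂˣ) ℂ) :
    Dop g (Phi p) = 0 ↔ ∀ a ∈ p.support, W g a = 0 := by
  classical
  rw [Dop_Phi]
  have hinj : Function.Injective (Phi (G := G)) := (PhiEquiv (G := G)).injective
  rw [show (0 : MvPolynomial G ℂ) = Phi 0 from (map_zero _).symm, hinj.eq_iff]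
  constructor
  · intro h0 a ha
    have := congrArg (coeff a) h0
    rw [coeff_zero] at this
    rw [MvPolynomial.coeff_sum] at this
    simp_rw [coeff_monomial] at this
    rw [Finset.sum_ite_eq' p.support a (fun a' => W g a' * coeff a' p)] at this
    rw [if_pos ha] at this
    exact (mul_eq_zero.mp this).resolve_right (MvPolynomial.mem_support_iff.mp ha)
  · intro h0
    refine Finset.sum_eq_zero fun a ha => ?_
    rw [h0 a ha, zero_mul, monomial_zero]

end FrobAux


namespace FrobAux

variable {G : Type*} [CommGroup G] [Fintype G]

lemma W_eq_zero_iff (a : (G →* ℂˣ) →₀ ℕ) :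
    (∀ g : G, g ≠ 1 → W g a = 0) ↔ ∃ m : ℕ, ∀ χ : G →* ℂˣ, a χ = m := by
  constructor
  · intro hW
    set c : ℂ := (∑ χ : G →* ℂˣ, (a χ : ℂ)) / (Fintype.card G : ℂ) with hc
    have hinj : Function.Injective (fun χ : G →* ℂˣ => (Units.coeHom ℂ).comp χ) := by
      intro χ ψ h
      ext g
      exact DFunLike.congr_fun h g
    have li := (linearIndependent_monoidHom G ℂ).comp
      (fun χ : G →* ℂˣ => (Units.coeHom ℂ).comp χ) hinj
    have hsum : ∑ χ : G →* ℂˣ, ((a χ : ℂ) - c) • (⇑((Units.coeHom ℂ).comp χ) : G → ℂ) = 0 := by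
      funext g
      simp only [Finset.sum_apply, Pi.smul_apply, Pi.zero_apply, smul_eq_mul,
        MonoidHom.coe_comp, Function.comp_apply, Units.coeHom_apply]
      by_cases hg : g = 1
      · subst hg
        simp only [map_one, Units.val_one, mul_one]
        rw [Finset.sum_sub_distrib, Finset.sum_const, Finset.card_univ, card_char (G := G),
          nsmul_eq_mul, hc, mul_div_cancel₀ _ cardG_ne_zero, sub_self]
      · have h1 : ∑ χ : G →* ℂˣ, (a χ : ℂ) * ((χ g : ℂˣ) : ℂ) = 0 := hW g hg
        have h2 : ∑ χ : G →* ℂˣ, ((χ g : ℂˣ) : ℂ) = 0 := sum_dual_eq_zero hg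
        simp_rw [sub_mul]
        rw [Finset.sum_sub_distrib, h1, ← Finset.mul_sum, h2, mul_zero, sub_zero]
    have hzero := Fintype.linearIndependent_iff.mp li (fun χ => (a χ : ℂ) - c) hsum
    have hca : ∀ χ : G →* ℂˣ, (a χ : ℂ) = c := fun χ => sub_eq_zero.mp (hzero χ)
    refine ⟨a 1, fun χ => ?_⟩
    have : (a χ : ℂ) = ((a 1 : ℕ) : ℂ) := by rw [hca χ, hca 1]
    exact_mod_cast this
  · rintro ⟨m, hm⟩ g hg
    unfold W
    simp_rw [hm]
    rw [← Finset.mul_sum, sum_dual_eq_zero hg, mul_zero]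

end FrobAux


namespace FrobAux

variable {G : Type*} [CommGroup G] [Fintype G]

/-- product of all the `X χ`. -/
noncomputable def T (G : Type*) [CommGroup G] [Fintype G] : MvPolynomial (G →* ℂˣ) ℂ :=
  ∏ χ : G →* ℂˣ, X χ

/-- the constant finsupp. -/
noncomputable def constF (G : Type*) [CommGroup G] [Fintype G] (m : ℕ) : (G →* ℂˣ) →₀ ℕ :=
  Finsupp.equivFunOnFinite.symm fun _ => m

@[simp] lemma constF_apply (m : ℕ) (χ : G →* ℂˣ) : constF G m χ = m := rfl

lemma T_pow (m : ℕ) : (T G) ^ m = monomial (constF G m) (1 : ℂ) := by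
  calc (T G) ^ m = ∏ χ : G →* ℂˣ, X χ ^ (constF G m) χ := by
        rw [T, ← Finset.prod_pow]
        exact Finset.prod_congr rfl fun χ _ => rfl
    _ = ∏ χ ∈ (constF G m).support, X χ ^ (constF G m) χ :=
        (Finset.prod_subset (Finset.subset_univ _) fun χ _ hχ => by
          rw [Finsupp.notMem_support_iff.mp hχ, pow_zero]).symm
    _ = monomial (constF G m) 1 := prod_X_pow_eq_monomial

lemma mem_adjoinT_iff (p : MvPolynomial (G →* ℂˣ) ℂ) :
    p ∈ Algebra.adjoin ℂ {T G} ↔ ∀ a ∈ p.support, ∃ m : ℕ, a = constF G m := by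
  constructor
  · intro hp
    rw [Algebra.adjoin_singleton_eq_range_aeval] at hp
    obtain ⟨q, hq⟩ := hp
    have hq' : (Polynomial.aeval (T G)) q = p := hq
    intro a ha
    rw [← hq'] at ha
    rw [Polynomial.aeval_def, Polynomial.eval₂_eq_sum, Polynomial.sum] at ha
    have := MvPolynomial.support_sum ha
    rw [Finset.mem_biUnion] at this
    obtain ⟨m, _, hm⟩ := this
    refine ⟨m, ?_⟩
    rw [T_pow] at hm
    have : algebraMap ℂ (MvPolynomial (G →* ℂˣ) ℂ) (q.coeff m) * monomial (constF G m) 1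
        = monomial (constF G m) (q.coeff m) := by
      rw [algebraMap_eq, C_mul_monomial, mul_one]
    rw [this] at hm
    have := MvPolynomial.support_monomial_subset hm
    simpa using this
  · intro hp
    suffices h : ∑ a ∈ p.support, monomial a (coeff a p) ∈ Algebra.adjoin ℂ {T G} by
      rwa [support_sum_monomial_coeff p] at h
    refine Subalgebra.sum_mem _ fun a ha => ?_
    obtain ⟨m, rfl⟩ := hp a ha
    have : (monomial (constF G m)) (coeff (constF G m) p)
        = C (coeff (constF G m) p) * (T G) ^ m := by
      rw [T_pow, C_mul_monomial, mul_one]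
    rw [this]
    exact mul_mem (Subalgebra.algebraMap_mem _ _)
      (pow_mem (Algebra.subset_adjoin (Set.mem_singleton _)) m)

end FrobAux


namespace FrobAux

variable {G : Type*} [CommGroup G] [Fintype G]

lemma coeHom_comp_injective :
    Function.Injective (fun χ : G →* ℂˣ => (Units.coeHom ℂ).comp χ) := by
  intro χ ψ h
  ext g
  exact DFunLike.congr_fun h g

lemma groupDet_eq [DecidableEq G] : groupDet G = Phi (T G) := by
  classical
  have hcard : Fintype.card (G →* ℂˣ) = Fintype.card G := card_char
  let e : (G →* ℂˣ) ≃ G := Fintype.equivOfCardEq hcard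
  let A : Matrix G G ℂ := Matrix.of fun h g' => (((e.symm g') h : ℂˣ) : ℂ)
  let V : Matrix G G (MvPolynomial G ℂ) := A.map C
  let M : Matrix G G (MvPolynomial G ℂ) := Matrix.of fun g h : G => (X (g * h⁻¹))
  have hMV : M * V = V * Matrix.diagonal fun g' => Y ((e.symm g')⁻¹) := by
    refine Matrix.ext fun g g' => ?_
    rw [Matrix.mul_apply, Matrix.mul_diagonal]
    have hL : ∀ h : G, M g h * V h g'
        = X (g * h⁻¹) * C ((((e.symm g') h : ℂˣ) : ℂ)) := fun h => rfl
    have hR : V g g' = C ((((e.symm g') g : ℂˣ) : ℂ)) := rfl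
    rw [hR]
    simp_rw [hL]
    set χ := e.symm g' with hχ
    calc ∑ h : G, X (g * h⁻¹) * C (((χ h : ℂˣ) : ℂ))
        = ∑ k : G, X k * C (((χ (k⁻¹ * g) : ℂˣ) : ℂ)) := by
          refine Fintype.sum_equiv ((Equiv.inv G).trans (Equiv.mulLeft g)) _ _ fun h => ?_
          simp only [Equiv.trans_apply, Equiv.inv_apply, Equiv.coe_mulLeft]
          rw [show (g * h⁻¹)⁻¹ * g = h by group]
      _ = (∑ k : G, C (((χ⁻¹ k : ℂˣ) : ℂ)) * X k) * C ((χ g : ℂˣ) : ℂ) := by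
          rw [Finset.sum_mul]
          refine Finset.sum_congr rfl fun k _ => ?_
          have hval : ((χ (k⁻¹ * g) : ℂˣ) : ℂ) = ((χ⁻¹ k : ℂˣ) : ℂ) * ((χ g : ℂˣ) : ℂ) := by
            rw [← Units.val_mul]
            congr 1
            simp [map_mul]
          rw [hval, C_mul]
          ring
      _ = C ((χ g : ℂˣ) : ℂ) * Y (χ⁻¹) := by rw [Y]; ring
  have hdet : M.det * V.det = V.det * ∏ g' : G, Y ((e.symm g')⁻¹) := by
    rw [← Matrix.det_mul, hMV, Matrix.det_mul, Matrix.det_diagonal]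
  have hA : A.det ≠ 0 := by
    have li := ((linearIndependent_monoidHom G ℂ).comp
      (fun χ : G →* ℂˣ => (Units.coeHom ℂ).comp χ) coeHom_comp_injective).comp
      e.symm e.symm.injective
    have li' : LinearIndependent ℂ (fun i : G => A.transpose i) := li
    have hU : IsUnit A := Matrix.linearIndependent_cols_iff_isUnit.mp li'
    exact ((Matrix.isUnit_iff_isUnit_det A).mp hU).ne_zero
  have hV : V.det ≠ 0 := by
    have : V.det = C A.det := (RingHom.map_det C A).symm
    rw [this]
    simpa using hA
  have hdM : M.det = ∏ g' : G, Y ((e.symm g')⁻¹) := by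
    refine mul_left_cancel₀ hV ?_
    rw [← hdet]
    ring
  have hProd : ∏ g' : G, Y ((e.symm g')⁻¹) = ∏ χ : G →* ℂˣ, Y χ := by
    rw [Equiv.prod_comp e.symm fun χ => Y χ⁻¹]
    have := Equiv.prod_comp (Equiv.inv (G →* ℂˣ)) (Y (G := G))
    simpa [Equiv.inv_apply] using this
  have hPhiT : Phi (T G) = ∏ χ : G →* ℂˣ, Y χ := by
    rw [T, map_prod]
    simp [Phi]
  have hgd : groupDet G = M.det := rfl
  rw [hgd, hdM, hProd, ← hPhiT]

end FrobAux

/-- For a finite abelian group, a polynomial is annihilated by every `D_g`, `g ≠ 1`,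
iff it is a polynomial in the group determinant. -/
theorem invariant_ring_abelian {G : Type*} [CommGroup G] [Fintype G] [DecidableEq G]
    (f : MvPolynomial G ℂ) :
    (∀ g : G, g ≠ 1 → Dop g f = 0) ↔ f ∈ Algebra.adjoin ℂ {groupDet G} := by
  classical
  set p := (FrobAux.PhiEquiv (G := G)).symm f with hpdef
  have hf : f = FrobAux.Phi p := ((FrobAux.PhiEquiv (G := G)).apply_symm_apply f).symm
  have h1 : (∀ g : G, g ≠ 1 → Dop g f = 0) ↔
      ∀ a ∈ p.support, ∃ m : ℕ, a = FrobAux.constF G m := by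
    rw [hf]
    constructor
    · intro h a ha
      obtain ⟨m, hm⟩ := (FrobAux.W_eq_zero_iff a).mp fun g hg =>
        (FrobAux.Dop_Phi_eq_zero_iff g p).mp (h g hg) a ha
      exact ⟨m, Finsupp.ext fun χ => by rw [hm χ, FrobAux.constF_apply]⟩
    · intro h g hg
      rw [FrobAux.Dop_Phi_eq_zero_iff]
      intro a ha
      obtain ⟨m, rfl⟩ := h a ha
      exact (FrobAux.W_eq_zero_iff _).mpr ⟨m, fun χ => rfl⟩ g hg
  rw [h1, ← FrobAux.mem_adjoinT_iff, FrobAux.groupDet_eq,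
    show ({FrobAux.Phi (FrobAux.T G)} : Set (MvPolynomial G ℂ))
      = FrobAux.Phi '' {FrobAux.T G} from (Set.image_singleton).symm,
    ← AlgHom.map_adjoin]
  constructor
  · intro hp
    rw [hf]
    exact Subalgebra.mem_map.mpr ⟨p, hp, rfl⟩
  · intro hmem
    rw [hf] at hmem
    obtain ⟨y, hy, hyp⟩ := Subalgebra.mem_map.mp hmem
    have hip : y = p := (FrobAux.PhiEquiv (G := G)).injective hyp
    rwa [hip] at hy
end

section
/- Let G be a finite abelian group, H ≤ G, T coset representatives, X coset representatives of Ĝ_H in Ĝ, and for χ ∈ X define y_{tH}^χ := Σ_{h∈H} χ(th) x_{th}. Then for any χ ∈ X and g ∈ G: D_g Θ_{G/H}(y_{tH}^χ) = 0 if and only if g ∉ H. -/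
open MvPolynomial

section aux

variable {R A : Type*} [CommRing R] [CommRing A] [Algebra R A]

lemma derivation_sum_apply {ι : Type*} [DecidableEq ι] (s : Finset ι)
    (D : ι → Derivation R A A) (a : A) :
    (∑ i ∈ s, D i) a = ∑ i ∈ s, D i a := by
  induction s using Finset.induction_on with
  | empty => simp
  | insert _ _ ha ih => rw [Finset.sum_insert ha, Finset.sum_insert ha, Derivation.add_apply, ih]

lemma derivation_prod (D : Derivation R A A) {ι : Type*} [DecidableEq ι]
    (s : Finset ι) (f : ι → A) :
    D (∏ i ∈ s, f i) = ∑ i ∈ s, (∏ j ∈ s.erase i, f j) * D (f i) := by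
  induction s using Finset.induction_on with
  | empty => simp
  | @insert a s ha ih =>
    rw [Finset.prod_insert ha, D.leibniz, smul_eq_mul, smul_eq_mul, ih, Finset.mul_sum,
      Finset.sum_insert ha, Finset.erase_insert ha, add_comm]
    congr 1
    refine Finset.sum_congr rfl fun i hi => ?_
    rw [Finset.erase_insert_of_ne (fun h => ha (by rw [h]; exact hi)),
      Finset.prod_insert (fun h => ha (Finset.mem_of_mem_erase h)), mul_assoc]

lemma derivation_det {n : Type*} [Fintype n] [DecidableEq n]
    (D : Derivation R A A) (M : Matrix n n A) :
    D M.det = ∑ i, (M.updateRow i fun j => D (M i j)).det := by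
  have key : ∀ (i : n) (r : n → A) (σ : Equiv.Perm n),
      (∏ k, M.updateRow i r (σ k) k)
        = r (σ⁻¹ i) * ∏ k ∈ Finset.univ.erase (σ⁻¹ i), M (σ k) k := by
    intro i r σ
    rw [← Finset.mul_prod_erase Finset.univ _ (Finset.mem_univ (σ⁻¹ i))]
    congr 1
    · rw [show σ (σ⁻¹ i) = i from σ.apply_symm_apply i, Matrix.updateRow_self]
    · refine Finset.prod_congr rfl fun k hk => ?_
      rw [Matrix.updateRow_ne]
      intro h
      exact (Finset.ne_of_mem_erase hk) (by rw [← h, show σ⁻¹ (σ k) = k from σ.symm_apply_apply k])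
  calc D M.det
      = ∑ σ : Equiv.Perm n, (Equiv.Perm.sign σ : ℤ) •
          ∑ j, (∏ k ∈ Finset.univ.erase j, M (σ k) k) * D (M (σ j) j) := by
        rw [Matrix.det_apply', map_sum]
        refine Finset.sum_congr rfl fun σ _ => ?_
        rw [← zsmul_eq_mul, map_zsmul, derivation_prod]
    _ = ∑ σ : Equiv.Perm n, ∑ i, (Equiv.Perm.sign σ : ℤ) •
          ((∏ k ∈ Finset.univ.erase (σ⁻¹ i), M (σ k) k) * D (M i (σ⁻¹ i))) := by
        refine Finset.sum_congr rfl fun σ _ => ?_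
        rw [Finset.smul_sum]
        refine ((Equiv.sum_comp σ⁻¹ _).symm).trans (Finset.sum_congr rfl fun i _ => ?_)
        rw [show σ (σ⁻¹ i) = i from σ.apply_symm_apply i]
    _ = ∑ i, (M.updateRow i fun j => D (M i j)).det := by
        rw [Finset.sum_comm]
        refine Finset.sum_congr rfl fun i _ => ?_
        rw [Matrix.det_apply']
        refine Finset.sum_congr rfl fun σ _ => ?_
        rw [key i (fun j => D (M i j)) σ, ← zsmul_eq_mul]
        congr 1
        exact mul_comm _ _

end aux

/-- For any character `χ` of a finite abelian group `G` and any subgroup `H`,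
the group determinant of `G/H` evaluated at the forms `y_{tH}^χ = ∑_{h ∈ H} χ(th) x_{th}`
is annihilated by `D_g` iff `g ∉ H`. -/
theorem Dop_quotient_groupDet_eq_zero_iff {G : Type*} [CommGroup G] [Fintype G]
    [DecidableEq G] (H : Subgroup G) [Fintype (G ⧸ H)] [DecidableEq (G ⧸ H)]
    (χ : G →* ℂˣ)
    (z : G ⧸ H → MvPolynomial G ℂ)
    (hz : ∀ q : G ⧸ H, z q =
      ∑ g : G, if (g : G ⧸ H) = q then C ((χ g : ℂ)) * X g else 0)
    (g : G) :
    Dop g (Matrix.det (Matrix.of fun a b : G ⧸ H => z (a * b⁻¹))) = 0 ↔ g ∉ H := by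
  classical
  set N : Matrix (G ⧸ H) (G ⧸ H) (MvPolynomial G ℂ) :=
    Matrix.of fun a b : G ⧸ H => z (a * b⁻¹) with hNdef
  set D : Derivation ℂ (MvPolynomial G ℂ) (MvPolynomial G ℂ) :=
    ∑ h : G, (X (g⁻¹ * h) : MvPolynomial G ℂ) •
      (pderiv h : Derivation ℂ (MvPolynomial G ℂ) (MvPolynomial G ℂ)) with hDdef
  have hD : ∀ f, Dop g f = D f := by
    intro f
    unfold Dop
    rw [hDdef, derivation_sum_apply]
    exact Finset.sum_congr rfl fun h _ => by
      rw [Derivation.smul_apply, smul_eq_mul]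
  have hpz : ∀ (h : G) (q : G ⧸ H),
      pderiv h (z q) = if (h : G ⧸ H) = q then C ((χ h : ℂ)) else 0 := by
    intro h q
    rw [hz q, map_sum, Finset.sum_eq_single h]
    · split_ifs with hq
      · rw [pderiv_C_mul, pderiv_X_self, mul_one]
      · exact map_zero _
    · intro b _ hb
      split_ifs with hq
      · rw [pderiv_C_mul, pderiv_X_of_ne hb, mul_zero]
      · exact map_zero _
    · exact fun hmem => absurd (Finset.mem_univ h) hmem
  have hDz : ∀ q : G ⧸ H,
      D (z q) = C ((χ g : ℂ)) * z (((g⁻¹ : G) : G ⧸ H) * q) := by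
    intro q
    rw [← hD]
    unfold Dop
    simp only [hpz, mul_ite, mul_zero]
    rw [hz (((g⁻¹ : G) : G ⧸ H) * q), Finset.mul_sum]
    refine Fintype.sum_equiv (Equiv.mulLeft g⁻¹) _ _ fun h => ?_
    simp only [Equiv.coe_mulLeft]
    show _ = C ((χ g : ℂ)) * (if ((g⁻¹ * h : G) : G ⧸ H) = ((g⁻¹ : G) : G ⧸ H) * q then _ else 0)
    by_cases hq : (h : G ⧸ H) = q
    · rw [if_pos hq, if_pos (show ((g⁻¹ * h : G) : G ⧸ H) = ((g⁻¹ : G) : G ⧸ H) * q by rw [QuotientGroup.mk_mul, hq]),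
        ← mul_assoc, ← C_mul, ← Units.val_mul, ← map_mul χ, mul_inv_cancel_left, mul_comm]
    · rw [if_neg hq, if_neg (show ¬ (((g⁻¹ * h : G) : G ⧸ H) = ((g⁻¹ : G) : G ⧸ H) * q) from fun hc => hq (by
        rw [QuotientGroup.mk_mul] at hc
        exact mul_left_cancel hc))]
      rw [mul_zero]
  have hDN : ∀ i j : G ⧸ H,
      D (N i j) = C ((χ g : ℂ)) * N (((g⁻¹ : G) : G ⧸ H) * i) j := by
    intro i j
    show D (z (i * j⁻¹)) = C ((χ g : ℂ)) * z (((g⁻¹ : G) : G ⧸ H) * i * j⁻¹)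
    rw [hDz, mul_assoc]
  -- nonvanishing of the determinant
  set c : ℂ := ∑ g' : G, if g' ∈ H then (1 : ℂ) else 0 with hcdef
  have hc0 : c ≠ 0 := by
    rw [hcdef, Finset.sum_boole]
    exact_mod_cast Finset.card_ne_zero_of_mem
      (Finset.mem_filter.mpr ⟨Finset.mem_univ (1 : G), H.one_mem⟩)
  set v : G → ℂ := fun g' => if g' ∈ H then (((χ g')⁻¹ : ℂˣ) : ℂ) else 0 with hvdef
  have hφz : ∀ q : G ⧸ H, aeval v (z q) = if q = 1 then c else 0 := by
    intro q
    rw [hz q, map_sum]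
    have hterm : ∀ g' : G, aeval v (if (g' : G ⧸ H) = q then C ((χ g' : ℂ)) * X g' else 0)
        = if (g' : G ⧸ H) = q then (χ g' : ℂ) * v g' else 0 := fun g' => by
      split_ifs <;> simp
    simp only [hterm]; simp only [hvdef]
    by_cases hq : q = 1
    · subst hq
      rw [if_pos rfl, hcdef]
      refine Finset.sum_congr rfl fun g' _ => ?_
      by_cases hg' : g' ∈ H
      · rw [if_pos ((QuotientGroup.eq_one_iff g').mpr hg'), if_pos hg', if_pos hg',
          Units.mul_inv]
      · rw [if_neg (fun hc => hg' ((QuotientGroup.eq_one_iff g').mp hc)), if_neg hg']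
    · rw [if_neg hq]
      refine Finset.sum_eq_zero fun g' _ => ?_
      by_cases hg' : g' ∈ H
      · rw [if_neg (fun hc => hq (by rw [← hc]; exact (QuotientGroup.eq_one_iff g').mpr hg'))]
      · rw [if_neg hg', mul_zero, ite_self]
  have hdet : N.det ≠ 0 := by
    intro h0
    have h1 := RingHom.map_det
      ((aeval v : MvPolynomial G ℂ →ₐ[ℂ] ℂ) : MvPolynomial G ℂ →+* ℂ) N
    rw [h0, map_zero, RingHom.mapMatrix_apply] at h1
    have h2 : N.map ((aeval v : MvPolynomial G ℂ →ₐ[ℂ] ℂ) : MvPolynomial G ℂ →+* ℂ)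
        = Matrix.diagonal (fun _ : G ⧸ H => c) := by
      ext a b
      rw [Matrix.map_apply, Matrix.diagonal_apply]
      show aeval v (z (a * b⁻¹)) = _
      rw [hφz]
      by_cases hab : a = b
      · rw [if_pos (mul_inv_eq_one.mpr hab), if_pos hab]
      · rw [if_neg (fun hc => hab (mul_inv_eq_one.mp hc)), if_neg hab]
    rw [h2, Matrix.det_diagonal, Finset.prod_const] at h1
    exact pow_ne_zero _ hc0 h1.symm
  rw [hD]
  constructor
  · intro h0 hg
    have hone : ((g⁻¹ : G) : G ⧸ H) = 1 := (QuotientGroup.eq_one_iff _).mpr (inv_mem hg)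
    have e1 : ∀ i : G ⧸ H,
        (N.updateRow i fun j => D (N i j)).det = C ((χ g : ℂ)) * N.det := by
      intro i
      have hrow : (fun j => D (N i j)) = (C ((χ g : ℂ)) : MvPolynomial G ℂ) • N i := by
        funext j
        rw [hDN i j, hone, one_mul, Pi.smul_apply, smul_eq_mul]
      rw [hrow, Matrix.det_updateRow_smul, Matrix.updateRow_eq_self]
    rw [derivation_det] at h0
    simp only [e1] at h0
    rw [Finset.sum_const, Finset.card_univ, nsmul_eq_mul] at h0
    have hC : C ((χ g : ℂ)) ≠ (0 : MvPolynomial G ℂ) := by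
      simp only [ne_eq, MvPolynomial.C_eq_zero]
      exact Units.ne_zero _
    exact mul_ne_zero
      (Nat.cast_ne_zero.mpr Fintype.card_ne_zero :
        ((Fintype.card (G ⧸ H) : ℕ) : MvPolynomial G ℂ) ≠ 0)
      (mul_ne_zero hC hdet) h0
  · intro hg
    rw [derivation_det]
    refine Finset.sum_eq_zero fun i _ => ?_
    have hk : ((g⁻¹ : G) : G ⧸ H) * i ≠ i := by
      intro hc
      exact hg (inv_mem_iff.mp ((QuotientGroup.eq_one_iff (g⁻¹ : G)).mp
        (mul_eq_right.mp hc)))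
    have hrow : (fun j => D (N i j)) = (C ((χ g : ℂ)) : MvPolynomial G ℂ) • N (((g⁻¹ : G) : G ⧸ H) * i) := by
      funext j
      rw [hDN i j, Pi.smul_apply, smul_eq_mul]
    rw [hrow, Matrix.det_updateRow_smul,
      Matrix.det_zero_of_row_eq (Ne.symm hk)
        (by rw [Matrix.updateRow_self, Matrix.updateRow_ne hk]), mul_zero]
end
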